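/- arXiv:1704.07253 — 2 statements merged into one kernel-verified Lean document; each statement's English description precedes it below -/
import Mathlib

section
/- Let Ω ⊂ ℝⁿ be open and bounded and let E be a Cheeger set of Ω. Then E has variational curvature bounded above by the constant function h(Ω): for every ball B_ρ(x₀) and every measurable F ⊆ E with F Δ E compactly contained in B_ρ(x₀), one has P(E; B_ρ(x₀)) ≤ P(F; B_ρ(x₀)) + h(Ω)·|E \ F|. -/
open MeasureTheory Metric Set ENNReal

variable {n : ℕ}

/-- Divergence of a vector field on `ℝⁿ`. -/
noncomputable def vdiv (φ : EuclideanSpace ℝ (Fin n) → EuclideanSpace ℝ (Fin n))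
    (x : EuclideanSpace ℝ (Fin n)) : ℝ :=
  ∑ i : Fin n, fderiv ℝ φ x (EuclideanSpace.single i 1) i

/-- Relative (distributional) perimeter of `E` in the open set `A`. -/
noncomputable def perimeterIn (E A : Set (EuclideanSpace ℝ (Fin n))) : ℝ≥0∞ :=
  ⨆ (φ : EuclideanSpace ℝ (Fin n) → EuclideanSpace ℝ (Fin n)) (_ : ContDiff ℝ 1 φ)
    (_ : HasCompactSupport φ) (_ : tsupport φ ⊆ A) (_ : ∀ x, ‖φ x‖ ≤ 1),
    ENNReal.ofReal (∫ x in E, vdiv φ x)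

noncomputable def perimeter (E : Set (EuclideanSpace ℝ (Fin n))) : ℝ≥0∞ :=
  perimeterIn E Set.univ

noncomputable def cheegerConst (Ω : Set (EuclideanSpace ℝ (Fin n))) : ℝ≥0∞ :=
  ⨅ (F : Set (EuclideanSpace ℝ (Fin n))) (_ : MeasurableSet F) (_ : F ⊆ Ω)
    (_ : 0 < volume F), perimeter F / volume F

def IsCheegerSet (Ω E : Set (EuclideanSpace ℝ (Fin n))) : Prop :=
  MeasurableSet E ∧ E ⊆ Ω ∧ 0 < volume E ∧ perimeter E / volume E = cheegerConst Ω

/-! ### Auxiliary lemmas -/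

lemma vdiv_eq_zero_of_nmem {φ : EuclideanSpace ℝ (Fin n) → EuclideanSpace ℝ (Fin n)}
    {x : EuclideanSpace ℝ (Fin n)} (hx : x ∉ tsupport φ) : vdiv φ x = 0 := by
  have hf : fderiv ℝ φ x = 0 := by
    have h0 : φ =ᶠ[nhds x] (fun _ => (0 : EuclideanSpace ℝ (Fin n))) :=
      Filter.eventually_of_mem ((isClosed_tsupport φ).isOpen_compl.mem_nhds hx)
        (fun y hy => image_eq_zero_of_notMem_tsupport hy)
    rw [h0.fderiv_eq, fderiv_fun_const]
    rfl
  simp [vdiv, hf]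

lemma vdiv_continuous {φ : EuclideanSpace ℝ (Fin n) → EuclideanSpace ℝ (Fin n)}
    (hφ : ContDiff ℝ 1 φ) : Continuous (vdiv φ) := by
  have h := hφ.continuous_fderiv one_ne_zero
  exact continuous_finset_sum _ fun i _ =>
    (PiLp.continuous_apply 2 _ i).comp (h.clm_apply continuous_const)

lemma vdiv_hasCompactSupport {φ : EuclideanSpace ℝ (Fin n) → EuclideanSpace ℝ (Fin n)}
    (h2 : HasCompactSupport φ) : HasCompactSupport (vdiv φ) := by
  refine IsCompact.of_isClosed_subset h2 isClosed_closure
    (closure_minimal ?_ (isClosed_tsupport φ))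
  intro x hx
  by_contra hxt
  exact hx (vdiv_eq_zero_of_nmem hxt)

lemma vdiv_integrableOn {φ : EuclideanSpace ℝ (Fin n) → EuclideanSpace ℝ (Fin n)}
    (hφ : ContDiff ℝ 1 φ) (h2 : HasCompactSupport φ) (s : Set (EuclideanSpace ℝ (Fin n))) :
    IntegrableOn (vdiv φ) s volume :=
  ((vdiv_continuous hφ).integrable_of_hasCompactSupport (vdiv_hasCompactSupport h2)).integrableOn

lemma vdiv_add {φ ψ : EuclideanSpace ℝ (Fin n) → EuclideanSpace ℝ (Fin n)}
    (hφ : ContDiff ℝ 1 φ) (hψ : ContDiff ℝ 1 ψ) (x : EuclideanSpace ℝ (Fin n)) :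
    vdiv (φ + ψ) x = vdiv φ x + vdiv ψ x := by
  unfold vdiv
  have h : fderiv ℝ (φ + ψ) x = fderiv ℝ φ x + fderiv ℝ ψ x := by
    have := fderiv_add (𝕜 := ℝ) (hφ.differentiable one_ne_zero x) (hψ.differentiable one_ne_zero x)
    exact this
  rw [h, ← Finset.sum_add_distrib]
  rfl

lemma exists_radius {C : Set (EuclideanSpace ℝ (Fin n))} {x₀ : EuclideanSpace ℝ (Fin n)} {ρ : ℝ}
    (hC : IsCompact C) (hsub : C ⊆ ball x₀ ρ) (hρ : 0 < ρ) :
    ∃ r, 0 < r ∧ r < ρ ∧ C ⊆ closedBall x₀ r := by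
  rcases C.eq_empty_or_nonempty with h | h
  · exact ⟨ρ / 2, by linarith, by linarith, by simp [h]⟩
  · obtain ⟨z, hz, hmax⟩ := hC.exists_isMaxOn h
      ((continuous_dist.comp (continuous_id.prodMk continuous_const)).continuousOn
        (s := C) : ContinuousOn (fun y => dist y x₀) C)
    refine ⟨max (dist z x₀) (ρ / 2), lt_max_of_lt_right (by linarith), ?_, ?_⟩
    · exact max_lt (by simpa [mem_ball] using hsub hz) (by linarith)
    · intro y hy
      simp only [mem_closedBall]
      exact le_max_of_le_left (hmax hy)

lemma le_perimeterIn {E A : Set (EuclideanSpace ℝ (Fin n))}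
    {φ : EuclideanSpace ℝ (Fin n) → EuclideanSpace ℝ (Fin n)}
    (h1 : ContDiff ℝ 1 φ) (h2 : HasCompactSupport φ) (h3 : tsupport φ ⊆ A)
    (h4 : ∀ x, ‖φ x‖ ≤ 1) :
    ENNReal.ofReal (∫ x in E, vdiv φ x) ≤ perimeterIn E A :=
  le_iSup_of_le φ (le_iSup_of_le h1 (le_iSup_of_le h2 (le_iSup_of_le h3
    (le_iSup_of_le h4 le_rfl))))

lemma perimeterIn_le {E A : Set (EuclideanSpace ℝ (Fin n))} {c : ℝ≥0∞}
    (h : ∀ φ : EuclideanSpace ℝ (Fin n) → EuclideanSpace ℝ (Fin n), ContDiff ℝ 1 φ →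
      HasCompactSupport φ → tsupport φ ⊆ A → (∀ x, ‖φ x‖ ≤ 1) →
      ENNReal.ofReal (∫ x in E, vdiv φ x) ≤ c) :
    perimeterIn E A ≤ c :=
  iSup_le fun φ => iSup_le fun h1 => iSup_le fun h2 => iSup_le fun h3 => iSup_le fun h4 =>
    h φ h1 h2 h3 h4

lemma integral_split {E F : Set (EuclideanSpace ℝ (Fin n))}
    {φ : EuclideanSpace ℝ (Fin n) → EuclideanSpace ℝ (Fin n)}
    (hφ1 : ContDiff ℝ 1 φ) (hφ2 : HasCompactSupport φ)
    (hE : MeasurableSet E) (hF : MeasurableSet F) (hFE : F ⊆ E) :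
    ∫ x in E, vdiv φ x = (∫ x in F, vdiv φ x) + ∫ x in E \ F, vdiv φ x := by
  rw [← setIntegral_union disjoint_sdiff_self_right (hE.diff hF)
    (vdiv_integrableOn hφ1 hφ2 F) (vdiv_integrableOn hφ1 hφ2 (E \ F)),
    Set.union_diff_cancel hFE]

theorem cheeger_set_variational_curvature_bound (Ω E : Set (EuclideanSpace ℝ (Fin n)))
    (hΩo : IsOpen Ω) (hΩb : Bornology.IsBounded Ω) (hE : IsCheegerSet Ω E)
    (x₀ : EuclideanSpace ℝ (Fin n)) (ρ : ℝ) (hρ : 0 < ρ)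
    (F : Set (EuclideanSpace ℝ (Fin n))) (hF : MeasurableSet F) (hFE : F ⊆ E)
    (hcc : closure (symmDiff F E) ⊆ Metric.ball x₀ ρ)
    (hcpt : IsCompact (closure (symmDiff F E))) :
    perimeterIn E (Metric.ball x₀ ρ) ≤
      perimeterIn F (Metric.ball x₀ ρ) + cheegerConst Ω * volume (E \ F) := by
  obtain ⟨hEm, hEΩ, hEvol, hEcheeger⟩ := hE
  set B := ball x₀ ρ with hB
  set h := cheegerConst Ω with hh
  have hKdef : symmDiff F E = E \ F := by
    rw [Set.symmDiff_def]
    rw [Set.diff_eq_empty.2 hFE]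
    simp
  have hEFm : MeasurableSet (E \ F) := hEm.diff hF
  -- Case: |E \ F| = 0
  by_cases h0 : volume (E \ F) = 0
  · have hae : (E : Set (EuclideanSpace ℝ (Fin n))) =ᵐ[volume] F := by
      rw [ae_eq_set]
      exact ⟨h0, by rw [Set.diff_eq_empty.2 hFE]; simp⟩
    have heq : perimeterIn E B = perimeterIn F B := by
      unfold perimeterIn
      refine iSup_congr fun φ => iSup_congr fun _ => iSup_congr fun _ =>
        iSup_congr fun _ => iSup_congr fun _ => ?_
      rw [setIntegral_congr_set hae]
    rw [heq]
    exact le_self_add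
  -- Case: h = ⊤
  by_cases htop : h = ⊤
  · rw [htop, ENNReal.top_mul h0]
    simp
  -- Main case
  have hvolE_ne_top : volume E ≠ ⊤ := by
    have h1 : volume E ≤ volume (closure Ω) := measure_mono (hEΩ.trans subset_closure)
    exact ne_top_of_le_ne_top hΩb.isCompact_closure.measure_lt_top.ne h1
  have hPE : perimeter E = h * volume E := by
    rw [← hEcheeger, ENNReal.div_mul_cancel hEvol.ne' hvolE_ne_top]
  have hPE_ne_top : perimeter E ≠ ⊤ := by
    rw [hPE]; exact ENNReal.mul_ne_top htop hvolE_ne_top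
  have hvolF_ne_top : volume F ≠ ⊤ :=
    ne_top_of_le_ne_top hvolE_ne_top (measure_mono hFE)
  have hlow : h * volume F ≤ perimeter F := by
    rcases eq_or_ne (volume F) 0 with hv0 | hv0
    · rw [hv0, mul_zero]; exact zero_le
    · have h1 : h ≤ perimeter F / volume F := by
        rw [hh, cheegerConst]
        exact iInf_le_of_le F (iInf_le_of_le hF (iInf_le_of_le (hFE.trans hEΩ)
          (iInf_le_of_le (pos_iff_ne_zero.2 hv0) le_rfl)))
      exact (ENNReal.le_div_iff_mul_le (Or.inl hv0) (Or.inl hvolF_ne_top)).1 h1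
  have hsplitvol : volume F + volume (E \ F) = volume E := by
    rw [← measure_union disjoint_sdiff_self_right hEFm, Set.union_diff_cancel hFE]
  have hPE_le : perimeter E ≤ perimeter F + h * volume (E \ F) := by
    rw [hPE, ← hsplitvol, mul_add]
    exact add_le_add_left hlow _
  refine perimeterIn_le fun φ hφ1 hφ2 hφ3 hφ4 => ?_
  obtain ⟨r, hr0, hrρ, hCr⟩ := exists_radius (hφ2.union hcpt)
    (Set.union_subset hφ3 hcc) hρ
  set A : Set (EuclideanSpace ℝ (Fin n)) := (closedBall x₀ r)ᶜ with hA
  have htφ : tsupport φ ⊆ closedBall x₀ r := (Set.subset_union_left).trans hCr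
  have hKr : E \ F ⊆ closedBall x₀ r := by
    intro x hx
    exact hCr (Or.inr (subset_closure (by rw [hKdef]; exact hx)))
  -- For any ψ supported in A, ∫_F div ψ = ∫_E div ψ
  have hFψ_eq : ∀ ψ : EuclideanSpace ℝ (Fin n) → EuclideanSpace ℝ (Fin n), ContDiff ℝ 1 ψ →
      HasCompactSupport ψ → tsupport ψ ⊆ A →
      ∫ x in F, vdiv ψ x = ∫ x in E, vdiv ψ x := by
    intro ψ h1 h2 h3
    rw [integral_split h1 h2 hEm hF hFE]
    have hz : ∫ x in E \ F, vdiv ψ x = 0 := by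
      rw [setIntegral_congr_fun hEFm (fun x hx =>
        vdiv_eq_zero_of_nmem (fun hmem => (h3 hmem) (hKr hx)))]
      exact integral_zero _ _
    rw [hz, add_zero]
  -- Key 1: ofReal ∫_E div φ + P(F; A) ≤ P(E)
  have haφ : ENNReal.ofReal (∫ x in E, vdiv φ x) ≤ perimeter E :=
    le_perimeterIn hφ1 hφ2 (Set.subset_univ _) hφ4
  have key1 : ENNReal.ofReal (∫ x in E, vdiv φ x) + perimeterIn F A ≤ perimeter E := by
    have hb : perimeterIn F A ≤ perimeter E - ENNReal.ofReal (∫ x in E, vdiv φ x) := by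
      refine perimeterIn_le fun ψ h1 h2 h3 h4 => ?_
      refine ENNReal.le_sub_of_add_le_right ENNReal.ofReal_ne_top ?_
      rw [hFψ_eq ψ h1 h2 h3]
      rcases le_or_gt (∫ x in E, vdiv ψ x) 0 with hneg | hpos
      · rw [ENNReal.ofReal_of_nonpos hneg, zero_add]
        exact haφ
      rcases le_or_gt (∫ x in E, vdiv φ x) 0 with hneg2 | hpos2
      · rw [ENNReal.ofReal_of_nonpos hneg2, add_zero]
        exact le_perimeterIn h1 h2 (Set.subset_univ _) h4
      · rw [← ENNReal.ofReal_add hpos.le hpos2.le]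
        have hsum : (∫ x in E, vdiv ψ x) + ∫ x in E, vdiv φ x
            = ∫ x in E, vdiv (ψ + φ) x := by
          rw [setIntegral_congr_fun hEm (fun x _ => vdiv_add h1 hφ1 x)]
          exact (integral_add (vdiv_integrableOn h1 h2 E) (vdiv_integrableOn hφ1 hφ2 E)).symm
        rw [hsum]
        refine le_perimeterIn (h1.add hφ1) (h2.add hφ2) (Set.subset_univ _) fun x => ?_
        by_cases hx : x ∈ closedBall x₀ r
        · have : ψ x = 0 := image_eq_zero_of_notMem_tsupport (fun hmem => (h3 hmem) hx)
          simp only [Pi.add_apply, this, zero_add]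
          exact hφ4 x
        · have : φ x = 0 := image_eq_zero_of_notMem_tsupport (fun hmem => hx (htφ hmem))
          simp only [Pi.add_apply, this, add_zero]
          exact h4 x
    calc ENNReal.ofReal (∫ x in E, vdiv φ x) + perimeterIn F A
        ≤ ENNReal.ofReal (∫ x in E, vdiv φ x)
          + (perimeter E - ENNReal.ofReal (∫ x in E, vdiv φ x)) := add_le_add_right hb _
      _ = perimeter E := add_tsub_cancel_of_le haφ
  have hPFA_ne_top : perimeterIn F A ≠ ⊤ :=
    ne_top_of_le_ne_top hPE_ne_top (le_add_self.trans key1)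
  -- Key 3: P(F) ≤ P(F; B) + P(F; A)
  have key3 : perimeter F ≤ perimeterIn F B + perimeterIn F A := by
    refine perimeterIn_le fun ψ h1 h2 h3 h4 => ?_
    set rIn : ℝ := r + (ρ - r) / 3 with hrIn
    set rOut : ℝ := r + 2 * (ρ - r) / 3 with hrOut
    have hrIn0 : 0 < rIn := by rw [hrIn]; linarith
    have hrInOut : rIn < rOut := by rw [hrIn, hrOut]; linarith
    have hrOutρ : rOut < ρ := by rw [hrOut]; linarith
    have hrrIn : r < rIn := by rw [hrIn]; linarith
    set η : ContDiffBump x₀ := ⟨rIn, rOut, hrIn0, hrInOut⟩ with hη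
    set φ₁ : EuclideanSpace ℝ (Fin n) → EuclideanSpace ℝ (Fin n) :=
      fun x => η x • ψ x with hφ₁
    set φ₂ : EuclideanSpace ℝ (Fin n) → EuclideanSpace ℝ (Fin n) :=
      fun x => (1 - η x) • ψ x with hφ₂
    have hc1 : ContDiff ℝ 1 φ₁ := (η.contDiff (n := 1)).smul h1
    have hc2 : ContDiff ℝ 1 φ₂ := (contDiff_const.sub (η.contDiff (n := 1))).smul h1
    have hs1 : HasCompactSupport φ₁ := h2.smul_left (f := fun x => (η x : ℝ))
    have hs2 : HasCompactSupport φ₂ := h2.smul_left (f := fun x => (1 - η x : ℝ))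
    have ht1 : tsupport φ₁ ⊆ B := by
      have hsup : Function.support φ₁ ⊆ ball x₀ rOut := by
        intro x hx
        have : η x ≠ 0 := fun hz => hx (by simp [hφ₁, hz])
        rw [← η.support_eq]
        exact this
      calc tsupport φ₁ ⊆ closure (ball x₀ rOut) := closure_mono hsup
        _ = closedBall x₀ rOut := closure_ball x₀ (hrIn0.trans hrInOut).ne'
        _ ⊆ B := closedBall_subset_ball hrOutρ
    have ht2 : tsupport φ₂ ⊆ A := by
      have hsup : Function.support φ₂ ⊆ (ball x₀ rIn)ᶜ := by
        intro x hx
        simp only [mem_compl_iff]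
        intro hmem
        have : η x = 1 := η.one_of_mem_closedBall (ball_subset_closedBall hmem)
        exact hx (by simp [hφ₂, this])
      have hclosed : IsClosed ((ball x₀ rIn)ᶜ) := isOpen_ball.isClosed_compl
      calc tsupport φ₂ ⊆ (ball x₀ rIn)ᶜ := closure_minimal hsup hclosed
        _ ⊆ A := compl_subset_compl.2 (closedBall_subset_ball hrrIn)
    have hn1 : ∀ x, ‖φ₁ x‖ ≤ 1 := by
      intro x
      rw [hφ₁]
      simp only [norm_smul, Real.norm_eq_abs, abs_of_nonneg (η.nonneg (x := x))]
      calc η x * ‖ψ x‖ ≤ 1 * 1 :=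
        mul_le_mul (η.le_one) (h4 x) (norm_nonneg _) zero_le_one
      _ = 1 := one_mul 1
    have hn2 : ∀ x, ‖φ₂ x‖ ≤ 1 := by
      intro x
      rw [hφ₂]
      simp only [norm_smul, Real.norm_eq_abs]
      have h1η : |1 - η x| ≤ 1 := by
        rw [abs_le]
        constructor
        · have := η.le_one (x := x); linarith
        · have := η.nonneg (x := x); linarith
      calc |1 - η x| * ‖ψ x‖ ≤ 1 * 1 :=
        mul_le_mul h1η (h4 x) (norm_nonneg _) zero_le_one
      _ = 1 := one_mul 1
    have hψ12 : ψ = φ₁ + φ₂ := by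
      funext x
      simp only [hφ₁, hφ₂, Pi.add_apply, ← add_smul]
      simp
    have hint : ∫ x in F, vdiv ψ x = (∫ x in F, vdiv φ₁ x) + ∫ x in F, vdiv φ₂ x := by
      conv_lhs => rw [hψ12]
      rw [setIntegral_congr_fun hF (fun x _ => vdiv_add hc1 hc2 x)]
      exact integral_add (vdiv_integrableOn hc1 hs1 F) (vdiv_integrableOn hc2 hs2 F)
    rw [hint]
    exact le_trans ENNReal.ofReal_add_le
      (add_le_add (le_perimeterIn hc1 hs1 ht1 hn1) (le_perimeterIn hc2 hs2 ht2 hn2))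
  -- assemble
  have chain : ENNReal.ofReal (∫ x in E, vdiv φ x) + perimeterIn F A ≤
      (perimeterIn F B + h * volume (E \ F)) + perimeterIn F A := by
    calc ENNReal.ofReal (∫ x in E, vdiv φ x) + perimeterIn F A
        ≤ perimeter E := key1
      _ ≤ perimeter F + h * volume (E \ F) := hPE_le
      _ ≤ (perimeterIn F B + perimeterIn F A) + h * volume (E \ F) :=
          add_le_add_left key3 _
      _ = (perimeterIn F B + h * volume (E \ F)) + perimeterIn F A := by ring
  exact (ENNReal.add_le_add_iff_right hPFA_ne_top).1 chain
end

section
/- Suppose E ⊂ ℝ² is a Jordan domain with curvature bounded from above by 1 in the viscosity sense, and let x ∈ E be a cut point. Then at least one of the following holds: (1) the projection set P_x contains more than one point; (2) x is a focal point. -/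
open MeasureTheory Metric Set ENNReal Filter

def IsJordanCurve (Γ : Set (EuclideanSpace ℝ (Fin 2))) : Prop :=
  Nonempty (↥(Metric.sphere (0 : EuclideanSpace ℝ (Fin 2)) 1) ≃ₜ ↥Γ)

def IsJordanDomain (Ω : Set (EuclideanSpace ℝ (Fin 2))) : Prop :=
  ∃ Γ : Set (EuclideanSpace ℝ (Fin 2)), IsJordanCurve Γ ∧ IsOpen Ω ∧
    Bornology.IsBounded Ω ∧ IsConnected Ω ∧ frontier Ω = Γ ∧
    ∀ x ∈ Ω, connectedComponentIn Γᶜ x = Ω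

/-- `E` has curvature bounded above by `h` in the viscosity sense at the point `x ∈ ∂E`. -/
def ViscCurvLEAt (E : Set (EuclideanSpace ℝ (Fin 2))) (h : ℝ) (x : EuclideanSpace ℝ (Fin 2)) :
    Prop :=
  ∀ (y : EuclideanSpace ℝ (Fin 2)) (ρ : ℝ), 0 < ρ → x ∈ Metric.sphere y ρ →
    (∃ ε > 0, E ∩ Metric.ball x ε ⊆ Metric.closedBall y ρ) → 1 / h ≤ ρ

/-- `E` has curvature bounded above by `h` in the viscosity sense. -/
def ViscCurvLE (E : Set (EuclideanSpace ℝ (Fin 2))) (h : ℝ) : Prop :=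
  ∀ x ∈ frontier E, ViscCurvLEAt E h x

/-- The projection set `P_x = {y ∈ ∂E : |x − y| = dist(x, ∂E)}`. -/
def projSet (E : Set (EuclideanSpace ℝ (Fin 2))) (x : EuclideanSpace ℝ (Fin 2)) :
    Set (EuclideanSpace ℝ (Fin 2)) :=
  {y ∈ frontier E | dist x y = Metric.infDist x (frontier E)}

/-- The point `z_{x,y}(t) = x + t(x − y)`. -/
noncomputable def zpt (x y : EuclideanSpace ℝ (Fin 2)) (t : ℝ) : EuclideanSpace ℝ (Fin 2) :=
  x + t • (x - y)

/-- `x` is a cut point of `E`. -/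
def IsCutPoint (E : Set (EuclideanSpace ℝ (Fin 2))) (x : EuclideanSpace ℝ (Fin 2)) : Prop :=
  ∃ y ∈ projSet E x,
    sSup {t : ℝ | dist (zpt x y t) y = Metric.infDist (zpt x y t) (frontier E)} = 0

/-- `x` is a focal point of `E`, with focal projection `y`: the supremum of the `t` such that
`y` is a local minimizer of `dist(z_{x,y}(t), ·)` among points of `∂E` equals `0`. -/
def IsFocalPoint (E : Set (EuclideanSpace ℝ (Fin 2))) (x : EuclideanSpace ℝ (Fin 2)) : Prop :=
  ∃ y ∈ projSet E x,
    sSup {t : ℝ | ∃ δ > 0, ∀ w ∈ frontier E ∩ Metric.ball y δ,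
      dist (zpt x y t) y ≤ dist (zpt x y t) w} = 0


lemma zpt_zero (x y : EuclideanSpace ℝ (Fin 2)) : zpt x y 0 = x := by simp [zpt]

lemma dist_zpt_right (x y : EuclideanSpace ℝ (Fin 2)) (t : ℝ) (ht : 0 ≤ t) :
    dist (zpt x y t) y = (1 + t) * dist x y := by
  have h : zpt x y t - y = (1 + t) • (x - y) := by
    simp only [zpt]; module
  rw [dist_eq_norm, h, norm_smul, Real.norm_eq_abs, abs_of_nonneg (by linarith), dist_eq_norm]

lemma dist_zpt_zpt (x y : EuclideanSpace ℝ (Fin 2)) (s t : ℝ) :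
    dist (zpt x y s) (zpt x y t) = |s - t| * dist x y := by
  have h : zpt x y s - zpt x y t = (s - t) • (x - y) := by simp only [zpt]; module
  rw [dist_eq_norm, h, norm_smul, Real.norm_eq_abs, dist_eq_norm]

lemma dist_x_zpt (x y : EuclideanSpace ℝ (Fin 2)) (t : ℝ) :
    dist x (zpt x y t) = |t| * dist x y := by
  have h := dist_zpt_zpt x y 0 t
  rw [zpt_zero] at h
  simpa using h

theorem cut_point_multiple_projections_or_focal (E : Set (EuclideanSpace ℝ (Fin 2)))
    (hE : IsJordanDomain E) (hcurv : ViscCurvLE E 1)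
    (x : EuclideanSpace ℝ (Fin 2)) (hx : x ∈ E) (hcut : IsCutPoint E x) :
    (projSet E x).Nontrivial ∨ IsFocalPoint E x := by
  obtain ⟨y, hy, hsupC⟩ := hcut
  by_cases hnt : (projSet E x).Nontrivial
  · exact Or.inl hnt
  right
  obtain ⟨Γ, hΓ, hopen, hbound, hconn, hfr, hcomp⟩ := hE
  have hyfr : y ∈ frontier E := hy.1
  have hynE : y ∉ E := by
    have h := hyfr
    rw [hopen.frontier_eq] at h
    exact h.2
  have hd : 0 < dist x y := dist_pos.2 (fun h => hynE (h ▸ hx))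
  have hfrne : (frontier E).Nonempty := ⟨y, hyfr⟩
  have hfrb : Bornology.IsBounded (frontier E) :=
    hbound.closure.subset frontier_subset_closure
  have hfrcpt : IsCompact (frontier E) :=
    Metric.isCompact_iff_isClosed_bounded.mpr ⟨isClosed_frontier, hfrb⟩
  refine ⟨y, hy, ?_⟩
  by_cases hbdd : BddAbove {t : ℝ | ∃ δ > 0, ∀ w ∈ frontier E ∩ Metric.ball y δ,
      dist (zpt x y t) y ≤ dist (zpt x y t) w}
  swap
  · exact Real.sSup_of_not_bddAbove hbdd
  by_contra hne
  have h0F : (0 : ℝ) ∈ {t : ℝ | ∃ δ > 0, ∀ w ∈ frontier E ∩ Metric.ball y δ,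
      dist (zpt x y t) y ≤ dist (zpt x y t) w} := by
    refine ⟨1, one_pos, fun w hw => ?_⟩
    rw [zpt_zero, hy.2]
    exact infDist_le_dist_of_mem hw.1
  have hpos : 0 < sSup {t : ℝ | ∃ δ > 0, ∀ w ∈ frontier E ∩ Metric.ball y δ,
      dist (zpt x y t) y ≤ dist (zpt x y t) w} :=
    (le_csSup hbdd h0F).lt_of_ne (Ne.symm hne)
  obtain ⟨t₀, ht₀F, ht₀⟩ := exists_lt_of_lt_csSup ⟨0, h0F⟩ hpos
  obtain ⟨δ, hδ, hloc⟩ := ht₀F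
  have hCbdd : BddAbove {t : ℝ | dist (zpt x y t) y = Metric.infDist (zpt x y t) (frontier E)} := by
    refine BddAbove.mono (fun t ht => ?_) hbdd
    refine ⟨1, one_pos, fun w hw => ?_⟩
    rw [ht]
    exact infDist_le_dist_of_mem hw.1
  have hkey : ∀ t, 0 < t → t ≤ t₀ →
      (∀ w ∈ frontier E, w ∉ Metric.ball y δ → dist (zpt x y t) y ≤ dist (zpt x y t) w) →
      False := by
    intro t ht htle hout
    have hin : ∀ w ∈ frontier E, dist (zpt x y t) y ≤ dist (zpt x y t) w := by
      intro w hw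
      by_cases hwb : w ∈ Metric.ball y δ
      · have h1 := hloc w ⟨hw, hwb⟩
        have h2 := dist_triangle (zpt x y t₀) (zpt x y t) w
        have h3 : dist (zpt x y t₀) (zpt x y t) = (t₀ - t) * dist x y := by
          rw [dist_zpt_zpt, abs_of_nonneg (by linarith)]
        rw [dist_zpt_right x y t₀ ht₀.le] at h1
        rw [dist_zpt_right x y t ht.le]
        nlinarith
      · exact hout w hw hwb
    have hge : dist (zpt x y t) y ≤ Metric.infDist (zpt x y t) (frontier E) := by
      by_contra hlt
      push_neg at hlt
      obtain ⟨w, hw, hwlt⟩ := (infDist_lt_iff hfrne).1 hlt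
      exact absurd (hin w hw) (not_le.2 hwlt)
    have htC : t ∈ {t : ℝ | dist (zpt x y t) y = Metric.infDist (zpt x y t) (frontier E)} :=
      le_antisymm hge (infDist_le_dist_of_mem hyfr)
    have := le_csSup hCbdd htC
    rw [hsupC] at this
    linarith
  by_cases hK : (frontier E \ Metric.ball y δ).Nonempty
  · have hKcl : IsClosed (frontier E \ Metric.ball y δ) := isClosed_frontier.sdiff isOpen_ball
    have hKcpt : IsCompact (frontier E \ Metric.ball y δ) :=
      Metric.isCompact_iff_isClosed_bounded.mpr ⟨hKcl, hfrb.subset diff_subset⟩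
    obtain ⟨w₀, hw₀, hw₀eq⟩ := hKcpt.exists_infDist_eq_dist hK x
    have hsub : (projSet E x).Subsingleton := Set.not_nontrivial_iff.1 hnt
    have hd' : dist x y < dist x w₀ := by
      have h1 : dist x y ≤ dist x w₀ := by
        rw [hy.2]
        exact infDist_le_dist_of_mem hw₀.1
      rcases h1.lt_or_eq with h | h
      · exact h
      · exfalso
        have hwp : w₀ ∈ projSet E x := ⟨hw₀.1, by rw [← h]; exact hy.2⟩
        have hwy : w₀ = y := hsub hwp hy
        rw [hwy] at hw₀
        exact hw₀.2 (mem_ball_self hδ)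
    set t := min t₀ ((dist x w₀ - dist x y) / (2 * dist x y)) with htdef
    have ht : 0 < t := lt_min ht₀ (div_pos (by linarith) (by linarith))
    refine (hkey t ht (min_le_left _ _) ?_).elim
    intro w hw hwb
    have h1 : dist x w₀ ≤ dist x w := by
      rw [← hw₀eq]
      exact infDist_le_dist_of_mem ⟨hw, hwb⟩
    have h2 : dist x (zpt x y t) = t * dist x y := by
      rw [dist_x_zpt, abs_of_pos ht]
    have h3 := dist_triangle x (zpt x y t) w
    have h5 : t * dist x y ≤ ((dist x w₀ - dist x y) / (2 * dist x y)) * dist x y :=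
      mul_le_mul_of_nonneg_right (min_le_right _ _) dist_nonneg
    have h6 : ((dist x w₀ - dist x y) / (2 * dist x y)) * dist x y
        = (dist x w₀ - dist x y) / 2 := by
      field_simp
    rw [dist_zpt_right x y t ht.le]
    nlinarith
  · refine (hkey t₀ ht₀ le_rfl ?_).elim
    intro w hw hwb
    exact (hK ⟨w, hw, hwb⟩).elim
end
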